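/- Let f, g, c_p > 0 and Π₀ ∈ ℝ, and let c(x, y) = (f²/(2y₂))(x₁ − y₁)² + g x₂/y₂ − c_p Π₀ for x ∈ ℝ² and y ∈ ℝ² with y₂ > 0. For fixed y with y₂ > 0, let Φ(x; y) = ((y₂/f²) x₁ + y₁, (y₂²/g)(x₂ − x₁²/(2f²))). Then for any y, z ∈ ℝ² with y₂ > 0 and z₂ > 0, the function u : ℝ² → ℝ defined by u(x) = c(Φ(x; y), y) − c(Φ(x; y), z) is affine: there exist a ∈ ℝ² and b ∈ ℝ such that u(x) = ⟨a, x⟩ + b for all x ∈ ℝ². In particular u is convex, so the 2D compressible semi-geostrophic cost function satisfies Loeper's condition. -/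
import Mathlib


/-- Loeper's condition for the 2D compressible semi-geostrophic cost: for any
`y, z` with positive second coordinates, the function
`u(x) = c(Φ(x;y), y) − c(Φ(x;y), z)` is affine, and in particular convex. -/
theorem stmt_5
    (f g c_p Pr₀ : ℝ) (hf : 0 < f) (hg : 0 < g) (hcp : 0 < c_p)
    (c : (ℝ × ℝ) → (ℝ × ℝ) → ℝ)
    (hc : ∀ x y : ℝ × ℝ,
      c x y = f ^ 2 / (2 * y.2) * (x.1 - y.1) ^ 2 + g * x.2 / y.2 - c_p * Pr₀)
    (Φ : (ℝ × ℝ) → (ℝ × ℝ) → ℝ × ℝ)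
    (hΦ : ∀ x y : ℝ × ℝ,
      Φ x y = (y.2 / f ^ 2 * x.1 + y.1, y.2 ^ 2 / g * (x.2 - x.1 ^ 2 / (2 * f ^ 2))))
    (y z : ℝ × ℝ) (hy : 0 < y.2) (hz : 0 < z.2)
    (u : ℝ × ℝ → ℝ) (hu : ∀ x : ℝ × ℝ, u x = c (Φ x y) y - c (Φ x y) z) :
    (∃ (a : ℝ × ℝ) (b : ℝ), ∀ x : ℝ × ℝ, u x = a.1 * x.1 + a.2 * x.2 + b)
      ∧ ConvexOn ℝ Set.univ u := by
  have hf' : (f : ℝ) ≠ 0 := ne_of_gt hf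
  have hg' : (g : ℝ) ≠ 0 := ne_of_gt hg
  have hy' : y.2 ≠ 0 := ne_of_gt hy
  have hz' : z.2 ≠ 0 := ne_of_gt hz
  set a : ℝ × ℝ := (-(y.2 * (y.1 - z.1) / z.2), y.2 - y.2 ^ 2 / z.2) with ha
  set b : ℝ := -(f ^ 2 * (y.1 - z.1) ^ 2 / (2 * z.2)) with hb
  have hval : ∀ x : ℝ × ℝ, u x = a.1 * x.1 + a.2 * x.2 + b := by
    intro x
    rw [hu, hc, hc, hΦ]
    simp only [ha, hb]
    field_simp
    ring
  refine ⟨⟨a, b, hval⟩, convex_univ, ?_⟩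
  intro p _ q _ s t hs ht hst
  simp only [hval, Prod.smul_fst, Prod.smul_snd, Prod.fst_add, Prod.snd_add,
    smul_eq_mul]
  apply le_of_eq
  linear_combination (-b) * hst
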